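/- Let k be a field, N ≥ 1, and let F and G be two complete flags in k^N. Then there exist a basis v_1, …, v_N of k^N and a permutation σ ∈ S_N such that F^i = span(v_1, …, v_i) and G^i = span(v_{σ(1)}, …, v_{σ(i)}) for all 0 ≤ i ≤ N. -/

import Mathlib

/-- A complete flag in `k^N`: a chain of subspaces `F 0 ⊆ F 1 ⊆ ⋯ ⊆ F N` with
`dim (F j) = j`. -/
structure CompleteFlag (k : Type*) [Field k] (N : ℕ) where
  F : Fin (N + 1) → Submodule k (Fin N → k)
  mono : Monotone F
  dim : ∀ j : Fin (N + 1), Module.finrank k (F j) = (j : ℕ)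

namespace BruhatAux

open Module Submodule

open scoped Classical

variable {k : Type*} [Field k] {N : ℕ}

noncomputable def nat (F : CompleteFlag k N) (n : ℕ) : Submodule k (Fin N → k) :=
  F.F ⟨min n N, by omega⟩

lemma nat_finrank (F : CompleteFlag k N) (n : ℕ) :
    finrank k (nat F n) = min n N := F.dim _

lemma nat_mono (F : CompleteFlag k N) {m n : ℕ} (h : m ≤ n) : nat F m ≤ nat F n :=
  F.mono (by simp only [Fin.mk_le_mk]; omega)

lemma nat_zero (F : CompleteFlag k N) : nat F 0 = ⊥ := by
  have h := nat_finrank F 0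
  simp only [Nat.zero_min] at h
  exact Submodule.finrank_eq_zero.mp h

lemma nat_top (F : CompleteFlag k N) : nat F N = ⊤ := by
  apply Submodule.eq_top_of_finrank_eq
  rw [nat_finrank, Module.finrank_fin_fun, min_self]

lemma nat_eq (F : CompleteFlag k N) (i : Fin (N + 1)) : nat F (i : ℕ) = F.F i := by
  unfold nat
  congr 1
  ext
  simp only
  omega

/-- The jump predicate: `F^{i+1} ∩ G^j ⊄ F^i`. -/
def J (F G : CompleteFlag k N) (i j : ℕ) : Prop :=
  ¬ (nat F (i + 1) ⊓ nat G j ≤ nat F i)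

lemma J_mono {F G : CompleteFlag k N} {i j j' : ℕ} (h : J F G i j) (hjj : j ≤ j') :
    J F G i j' := fun hle => h (le_trans (inf_le_inf_left _ (nat_mono G hjj)) hle)

lemma not_J_zero (F G : CompleteFlag k N) (i : ℕ) : ¬ J F G i 0 := by
  intro h
  exact h (by rw [nat_zero G, inf_bot_eq]; exact bot_le)

lemma J_N {F G : CompleteFlag k N} {i : ℕ} (hi : i < N) : J F G i N := by
  intro hle
  rw [nat_top G, inf_top_eq] at hle
  have := Submodule.finrank_mono hle
  rw [nat_finrank, nat_finrank] at this
  omega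

lemma d_le {F G : CompleteFlag k N} {i : ℕ} (hi : i < N) (j : ℕ) :
    finrank k ↥(nat F (i + 1) ⊓ nat G j) ≤ finrank k ↥(nat F i ⊓ nat G j) + 1 := by
  set S := nat F (i + 1) ⊓ nat G j with hS
  have h1 : S ⊓ nat F i = nat F i ⊓ nat G j := by
    rw [hS, inf_right_comm, inf_eq_right.mpr (nat_mono F (Nat.le_succ i))]
  have h2 := Submodule.finrank_sup_add_finrank_inf_eq S (nat F i)
  have h3 : S ⊔ nat F i ≤ nat F (i + 1) :=
    sup_le inf_le_left (nat_mono F (Nat.le_succ i))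
  have h4 := Submodule.finrank_mono h3
  rw [h1] at h2
  rw [nat_finrank] at h4
  have h5 : finrank k ↥(nat F i) = i := by rw [nat_finrank]; omega
  omega

lemma jump_iff {F G : CompleteFlag k N} {i : ℕ} (hi : i < N) (j : ℕ) :
    (nat F (i + 1) ⊓ nat G j ≤ nat F i) ↔
    finrank k ↥(nat F (i + 1) ⊓ nat G j) = finrank k ↥(nat F i ⊓ nat G j) := by
  constructor
  · intro hle
    have : nat F (i + 1) ⊓ nat G j = nat F i ⊓ nat G j :=
      le_antisymm (le_inf hle inf_le_right)
        (inf_le_inf_right _ (nat_mono F (Nat.le_succ i)))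
    rw [this]
  · intro heq
    have hle : nat F i ⊓ nat G j ≤ nat F (i + 1) ⊓ nat G j :=
      inf_le_inf_right _ (nat_mono F (Nat.le_succ i))
    have := Submodule.eq_of_le_of_finrank_le hle (le_of_eq heq)
    rw [← this]
    exact inf_le_left

lemma d_step {F G : CompleteFlag k N} {i : ℕ} (hi : i < N) (j : ℕ) :
    finrank k ↥(nat F (i + 1) ⊓ nat G j) =
      finrank k ↥(nat F i ⊓ nat G j) + (if J F G i j then 1 else 0) := by
  by_cases h : J F G i j
  · rw [if_pos h]
    have h1 := d_le (F := F) (G := G) hi j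
    have h2 : finrank k ↥(nat F (i + 1) ⊓ nat G j) ≠ finrank k ↥(nat F i ⊓ nat G j) :=
      fun he => h ((jump_iff (F := F) (G := G) hi j).mpr he)
    have h3 : finrank k ↥(nat F i ⊓ nat G j) ≤ finrank k ↥(nat F (i + 1) ⊓ nat G j) :=
      Submodule.finrank_mono (inf_le_inf_right _ (nat_mono F (Nat.le_succ i)))
    omega
  · rw [if_neg h]
    exact (jump_iff (F := F) (G := G) hi j).mp (not_not.mp h)

lemma d_sum (F G : CompleteFlag k N) (j : ℕ) :
    ∀ n, n ≤ N → (∑ i ∈ Finset.range n, (if J F G i j then 1 else 0)) =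
      finrank k ↥(nat F n ⊓ nat G j) := by
  intro n
  induction n with
  | zero =>
    intro _
    rw [Finset.sum_range_zero, nat_zero F, bot_inf_eq]
    simp
  | succ n ih =>
    intro hn
    rw [Finset.sum_range_succ, ih (by omega), d_step (by omega : n < N) j]

lemma count_J (F G : CompleteFlag k N) {j : ℕ} (hj : j ≤ N) :
    ((Finset.range N).filter (fun i => J F G i j)).card = j := by
  rw [Finset.card_filter]
  rw [d_sum F G j N le_rfl, nat_top F, top_inf_eq, nat_finrank]
  omega

lemma tau_exists {F G : CompleteFlag k N} {i : ℕ} (hi : i < N) :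
    ∃ j, J F G i (j + 1) := ⟨N - 1, by
  have h1 : N - 1 + 1 = N := by omega
  rw [h1]; exact J_N hi⟩

noncomputable def tau (F G : CompleteFlag k N) (i : ℕ) : ℕ :=
  if h : ∃ j, J F G i (j + 1) then Nat.find h else 0

lemma tau_spec {F G : CompleteFlag k N} {i : ℕ} (hi : i < N) :
    J F G i (tau F G i + 1) := by
  rw [tau, dif_pos (tau_exists hi)]
  exact Nat.find_spec (tau_exists hi)

lemma tau_min {F G : CompleteFlag k N} {i : ℕ} (hi : i < N) {j : ℕ} (hj : j < tau F G i) :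
    ¬ J F G i (j + 1) := by
  rw [tau, dif_pos (tau_exists hi)] at hj
  exact Nat.find_min (tau_exists hi) hj

lemma tau_le {F G : CompleteFlag k N} {i : ℕ} (hi : i < N) {j : ℕ}
    (hj : J F G i (j + 1)) : tau F G i ≤ j := by
  rw [tau, dif_pos (tau_exists hi)]
  exact Nat.find_le hj

lemma tau_lt_N {F G : CompleteFlag k N} {i : ℕ} (hi : i < N) : tau F G i < N := by
  have h1 : N - 1 + 1 = N := by omega
  have : tau F G i ≤ N - 1 := tau_le hi (by rw [h1]; exact J_N hi)
  omega

lemma not_J_tau {F G : CompleteFlag k N} {i : ℕ} (hi : i < N) :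
    ¬ J F G i (tau F G i) := by
  rcases Nat.eq_zero_or_pos (tau F G i) with h | h
  · rw [h]; exact not_J_zero F G i
  · have h1 : tau F G i - 1 + 1 = tau F G i := by omega
    have := tau_min hi (show tau F G i - 1 < tau F G i by omega)
    rwa [h1] at this

lemma tau_lt_iff {F G : CompleteFlag k N} {i : ℕ} (hi : i < N) (j : ℕ) :
    tau F G i < j ↔ J F G i j := by
  constructor
  · intro h
    exact J_mono (tau_spec hi) (by omega)
  · intro h
    have hj0 : j ≠ 0 := fun h0 => not_J_zero F G i (h0 ▸ h)
    have h1 : j - 1 + 1 = j := by omega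
    have := tau_le hi (show J F G i (j - 1 + 1) by rwa [h1])
    omega

lemma count_tau (F G : CompleteFlag k N) {j : ℕ} (hj : j ≤ N) :
    ((Finset.range N).filter (fun i => tau F G i < j)).card = j := by
  have hf : (Finset.range N).filter (fun i => tau F G i < j) =
      (Finset.range N).filter (fun i => J F G i j) := by
    apply Finset.filter_congr
    intro i hi
    rw [Finset.mem_range] at hi
    exact tau_lt_iff (F := F) (G := G) hi j
  rw [hf]
  exact count_J F G hj

lemma tau_injective {F G : CompleteFlag k N} {i₁ i₂ : ℕ} (h1 : i₁ < N) (h2 : i₂ < N)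
    (heq : tau F G i₁ = tau F G i₂) : i₁ = i₂ := by
  set t := tau F G i₁ with ht
  have htN : t < N := tau_lt_N h1
  have hc1 : ((Finset.range N).filter (fun i => tau F G i < t + 1)).card = t + 1 :=
    count_tau F G (by omega)
  have hc0 : ((Finset.range N).filter (fun i => tau F G i < t)).card = t :=
    count_tau F G (by omega)
  set s1 := (Finset.range N).filter (fun i => tau F G i < t + 1)
  set s0 := (Finset.range N).filter (fun i => tau F G i < t)
  have hsub : s0 ⊆ s1 := by
    intro a ha
    simp only [s0, s1, Finset.mem_filter] at *
    exact ⟨ha.1, by omega⟩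
  have hcard : (s1 \ s0).card = 1 := by
    rw [Finset.card_sdiff_of_subset hsub, hc1, hc0]; omega
  obtain ⟨x, hx⟩ := Finset.card_eq_one.mp hcard
  have m1 : i₁ ∈ s1 \ s0 := by
    simp only [s1, s0, Finset.mem_sdiff, Finset.mem_filter, Finset.mem_range, not_and, not_lt]
    exact ⟨⟨h1, by omega⟩, fun _ => by omega⟩
  have m2 : i₂ ∈ s1 \ s0 := by
    simp only [s1, s0, Finset.mem_sdiff, Finset.mem_filter, Finset.mem_range, not_and, not_lt]
    exact ⟨⟨h2, by omega⟩, fun _ => by omega⟩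
  rw [hx, Finset.mem_singleton] at m1 m2
  rw [m1, m2]

lemma exists_vec (F G : CompleteFlag k N) {i : ℕ} (hi : i < N) :
    ∃ x, x ∈ nat F (i + 1) ⊓ nat G (tau F G i + 1) ∧
      x ∉ nat F i ⊓ nat G (tau F G i + 1) := by
  set t := tau F G i
  have hlt : nat F i ⊓ nat G (t + 1) < nat F (i + 1) ⊓ nat G (t + 1) := by
    refine lt_of_le_of_ne (inf_le_inf_right _ (nat_mono F (Nat.le_succ i))) ?_
    intro he
    have := d_step (F := F) (G := G) hi (t + 1)
    rw [if_pos (tau_spec (F := F) (G := G) hi), ← he] at this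
    omega
  obtain ⟨x, hx1, hx2⟩ := SetLike.exists_of_lt hlt
  exact ⟨x, hx1, hx2⟩

noncomputable def vv (F G : CompleteFlag k N) (i : ℕ) : Fin N → k :=
  if h : i < N then Classical.choose (exists_vec F G h) else 0

lemma vv_mem_F {F G : CompleteFlag k N} {i : ℕ} (hi : i < N) :
    vv F G i ∈ nat F (i + 1) := by
  rw [vv, dif_pos hi]
  exact ((Classical.choose_spec (exists_vec F G hi)).1).1

lemma vv_mem_G {F G : CompleteFlag k N} {i : ℕ} (hi : i < N) :
    vv F G i ∈ nat G (tau F G i + 1) := by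
  rw [vv, dif_pos hi]
  exact ((Classical.choose_spec (exists_vec F G hi)).1).2

lemma vv_not_mem_F {F G : CompleteFlag k N} {i : ℕ} (hi : i < N) :
    vv F G i ∉ nat F i := by
  intro h
  have h2 := vv_mem_G (F := F) (G := G) hi
  have h3 := (Classical.choose_spec (exists_vec F G hi)).2
  rw [vv, dif_pos hi] at h h2
  exact h3 ⟨h, h2⟩

lemma vv_not_mem_G {F G : CompleteFlag k N} {i : ℕ} (hi : i < N) :
    vv F G i ∉ nat G (tau F G i) := by
  intro h
  have h1 := vv_mem_F (F := F) (G := G) hi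
  have hle := not_not.mp (not_J_tau (F := F) (G := G) hi)
  have hF : vv F G i ∈ nat F i := hle ⟨h1, h⟩
  exact vv_not_mem_F hi hF

lemma span_adapted (H : CompleteFlag k N) (w : ℕ → Fin N → k)
    (h1 : ∀ m, m < N → w m ∈ nat H (m + 1)) (h2 : ∀ m, m < N → w m ∉ nat H m) :
    ∀ n, n ≤ N → Submodule.span k (w '' {m | m < n}) = nat H n := by
  intro n
  induction n with
  | zero =>
    intro _
    have : {m : ℕ | m < 0} = ∅ := by ext; simp
    rw [this, Set.image_empty, Submodule.span_empty, nat_zero]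
  | succ n ih =>
    intro hn
    have hnN : n < N := by omega
    have hins : {m : ℕ | m < n + 1} = insert n {m | m < n} := by ext; simp; omega
    rw [hins, Set.image_insert_eq, Submodule.span_insert, ih (by omega)]
    set p := Submodule.span k {w n} ⊔ nat H n with hp
    have hle : p ≤ nat H (n + 1) :=
      sup_le ((Submodule.span_singleton_le_iff_mem _ _).mpr (h1 n hnN))
        (nat_mono H (Nat.le_succ n))
    have hlt : nat H n < p := by
      refine lt_of_le_of_ne le_sup_right ?_
      intro he
      exact h2 n hnN (he ▸ (le_sup_left : Submodule.span k {w n} ≤ p)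
        (Submodule.mem_span_singleton_self _))
    have h4 := Submodule.finrank_lt_finrank_of_lt hlt
    rw [nat_finrank] at h4
    refine Submodule.eq_of_le_of_finrank_le hle ?_
    rw [nat_finrank]
    omega

end BruhatAux

open BruhatAux Module Submodule in
/-- Bruhat decomposition, linear-algebraic form: any two complete flags in `k^N` admit
a common adapted basis `v₁, …, v_N` and a permutation `σ` with
`F^i = span(v₁,…,v_i)` and `G^i = span(v_{σ(1)},…,v_{σ(i)})`. -/
theorem common_adapted_basis (k : Type*) [Field k] (N : ℕ) (hN : 1 ≤ N)
    (F G : CompleteFlag k N) :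
    ∃ (v : Basis (Fin N) k (Fin N → k)) (σ : Equiv.Perm (Fin N)),
      ∀ i : Fin (N + 1),
        F.F i = Submodule.span k ((fun j => v j) '' {j : Fin N | (j : ℕ) < (i : ℕ)}) ∧
        G.F i = Submodule.span k ((fun j => v (σ j)) '' {j : Fin N | (j : ℕ) < (i : ℕ)}) := by
  classical
  -- the permutation
  let τ : Fin N → Fin N := fun i => ⟨tau F G i, tau_lt_N i.isLt⟩
  have τinj : Function.Injective τ := by
    intro a b hab
    have : tau F G (a : ℕ) = tau F G (b : ℕ) := by
      simpa [τ, Fin.mk.injEq] using hab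
    exact Fin.ext (tau_injective a.isLt b.isLt this)
  have τbij : Function.Bijective τ := (Finite.injective_iff_bijective).mp τinj
  let e : Equiv.Perm (Fin N) := Equiv.ofBijective τ τbij
  let σ : Equiv.Perm (Fin N) := e.symm
  have hτσ : ∀ j : Fin N, tau F G ((σ j : Fin N) : ℕ) = (j : ℕ) := by
    intro j
    have : τ (σ j) = j := e.apply_symm_apply j
    simpa [τ, Fin.ext_iff] using congrArg (fun x : Fin N => (x : ℕ)) this
  -- the basis vectors
  let vvFin : Fin N → (Fin N → k) := fun i => vv F G (i : ℕ)
  have hFspan : ∀ n, n ≤ N → Submodule.span k (vv F G '' {m | m < n}) = nat F n :=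
    span_adapted F (vv F G) (fun m hm => vv_mem_F hm) (fun m hm => vv_not_mem_F hm)
  -- G side auxiliary vector family
  let w : ℕ → (Fin N → k) := fun m => if h : m < N then vv F G ((σ ⟨m, h⟩ : Fin N) : ℕ) else 0
  have hw_mem : ∀ m, m < N → w m ∈ nat G (m + 1) := by
    intro m hm
    have := vv_mem_G (F := F) (G := G) (σ ⟨m, hm⟩ : Fin N).isLt
    rw [hτσ ⟨m, hm⟩] at this
    simpa [w, dif_pos hm] using this
  have hw_not : ∀ m, m < N → w m ∉ nat G m := by
    intro m hm
    have := vv_not_mem_G (F := F) (G := G) (σ ⟨m, hm⟩ : Fin N).isLt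
    rw [hτσ ⟨m, hm⟩] at this
    simpa [w, dif_pos hm] using this
  have hGspan : ∀ n, n ≤ N → Submodule.span k (w '' {m | m < n}) = nat G n :=
    span_adapted G w hw_mem hw_not
  -- build the basis
  have hrange : Set.range vvFin = vv F G '' {m | m < N} := by
    ext x
    constructor
    · rintro ⟨i, rfl⟩
      exact ⟨(i : ℕ), i.isLt, rfl⟩
    · rintro ⟨m, hm, rfl⟩
      exact ⟨⟨m, hm⟩, rfl⟩
  have htop : ⊤ ≤ Submodule.span k (Set.range vvFin) := by
    rw [hrange, hFspan N le_rfl, nat_top]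
  have hcard : Fintype.card (Fin N) = finrank k (Fin N → k) := by
    rw [Fintype.card_fin, Module.finrank_fin_fun]
  let v : Basis (Fin N) k (Fin N → k) := basisOfTopLeSpanOfCardEqFinrank vvFin htop hcard
  have hv : (v : Fin N → (Fin N → k)) = vvFin := coe_basisOfTopLeSpanOfCardEqFinrank _ _ _
  refine ⟨v, σ, fun i => ?_⟩
  have hiN : (i : ℕ) ≤ N := Nat.lt_succ_iff.mp i.isLt
  constructor
  · have himg : (fun j => v j) '' {j : Fin N | (j : ℕ) < (i : ℕ)} =
        vv F G '' {m | m < (i : ℕ)} := by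
      ext x
      constructor
      · rintro ⟨j, hj, rfl⟩
        exact ⟨(j : ℕ), hj, by rw [hv]⟩
      · rintro ⟨m, hm, rfl⟩
        have hm' : m < (i : ℕ) := hm
        exact ⟨⟨m, by omega⟩, hm, by rw [hv]⟩
    rw [himg, hFspan (i : ℕ) hiN, nat_eq]
  · have himg : (fun j => v (σ j)) '' {j : Fin N | (j : ℕ) < (i : ℕ)} =
        w '' {m | m < (i : ℕ)} := by
      ext x
      constructor
      · rintro ⟨j, hj, rfl⟩
        refine ⟨(j : ℕ), hj, ?_⟩
        simp only [w, dif_pos j.isLt, hv, vvFin]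
      · rintro ⟨m, hm, rfl⟩
        have hm' : m < (i : ℕ) := hm
        have hmN : m < N := by omega
        refine ⟨⟨m, hmN⟩, hm, ?_⟩
        simp only [w, dif_pos hmN, hv, vvFin]
    rw [himg, hGspan (i : ℕ) hiN, nat_eq]
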